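/- Fix β > 1, θ₀ ∈ ℝ^d, let m be the unique positive root of m = tanh(βm), let p = (1+m)/2, and let P_{θ₀} = p·N_d(θ₀,I_d) + (1−p)·N_d(−θ₀,I_d). Then E_{P_{θ₀}} tanh(βm + θ₀ᵀX) = m. -/

import Mathlib

open MeasureTheory
open scoped RealInnerProductSpace ENNReal

/-- The multivariate Gaussian measure `N_d(μ, I_d)` on `ℝ^d`. -/
noncomputable def gaussian (d : ℕ) (μ : EuclideanSpace ℝ (Fin d)) :
    Measure (EuclideanSpace ℝ (Fin d)) :=
  volume.withDensity
    (fun x => ENNReal.ofReal ((2 * Real.pi) ^ (-(d : ℝ) / 2) * Real.exp (-‖x - μ‖ ^ 2 / 2)))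

/-- The asymmetric two-component Gaussian mixture
`P_{θ₀} = ((1+m)/2) N_d(θ₀, I_d) + ((1−m)/2) N_d(−θ₀, I_d)`. -/
noncomputable def asymMix (d : ℕ) (θ₀ : EuclideanSpace ℝ (Fin d)) (m : ℝ) :
    Measure (EuclideanSpace ℝ (Fin d)) :=
  ENNReal.ofReal ((1 + m) / 2) • gaussian d θ₀ + ENNReal.ofReal ((1 - m) / 2) • gaussian d (-θ₀)

open scoped NNReal

namespace AsymMixProof

variable {d : ℕ}
local notation "E" => EuclideanSpace ℝ (Fin d)


lemma tanh_eq' (x : ℝ) :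
    Real.tanh x = (Real.exp (2*x) - 1) / (Real.exp (2*x) + 1) := by
  have h := Real.exp_ne_zero x
  rw [Real.tanh_eq_sinh_div_cosh, Real.sinh_eq, Real.cosh_eq,
    show (2:ℝ)*x = x + x by ring, Real.exp_add, Real.exp_neg]
  field_simp

lemma tanh_alg (a t : ℝ) :
    (1 + Real.tanh a) / 2 * (Real.tanh (a + t) * Real.exp t)
      + (1 - Real.tanh a) / 2 * (Real.tanh (a + t) * Real.exp (-t))
    = (1 + Real.tanh a) / 2 * Real.exp t - (1 - Real.tanh a) / 2 * Real.exp (-t) := by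
  have h1 : Real.exp (2*a) + 1 ≠ 0 := by positivity
  have h2 : Real.exp (2*a) * Real.exp t * Real.exp t + 1 ≠ 0 := by positivity
  have h3 := Real.exp_ne_zero t
  rw [tanh_eq', tanh_eq', show 2*(a+t) = 2*a + t + t by ring, Real.exp_add, Real.exp_add,
    Real.exp_neg]
  field_simp
  ring


lemma dens_continuous (μ : E) :
    Continuous fun x : E =>
      (2 * Real.pi) ^ (-(d : ℝ) / 2) * Real.exp (-‖x - μ‖ ^ 2 / 2) := by
  apply continuous_const.mul
  apply Real.continuous_exp.comp
  fun_prop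

lemma dens_nonneg (μ : E) (x : E) :
    0 ≤ (2 * Real.pi) ^ (-(d : ℝ) / 2) * Real.exp (-‖x - μ‖ ^ 2 / 2) := by
  positivity

lemma dens_meas (μ : E) :
    Measurable fun x : E =>
      Real.toNNReal ((2 * Real.pi) ^ (-(d : ℝ) / 2) * Real.exp (-‖x - μ‖ ^ 2 / 2)) :=
  (continuous_real_toNNReal.comp (dens_continuous μ)).measurable

lemma gaussian_eq (μ : E) :
    gaussian d μ = volume.withDensity
      (fun x => ((Real.toNNReal ((2 * Real.pi) ^ (-(d : ℝ) / 2)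
        * Real.exp (-‖x - μ‖ ^ 2 / 2)) : ℝ≥0) : ℝ≥0∞)) := rfl

lemma integral_gaussian_fun (μ : E) (g : E → ℝ) :
    ∫ x, g x ∂(gaussian d μ)
      = ∫ x : E, ((2 * Real.pi) ^ (-(d : ℝ) / 2) * Real.exp (-‖x - μ‖ ^ 2 / 2)) * g x := by
  rw [gaussian_eq, integral_withDensity_eq_integral_smul (dens_meas μ) g]
  congr 1
  funext x
  rw [NNReal.smul_def, Real.coe_toNNReal _ (dens_nonneg μ x), smul_eq_mul]

lemma integral_dens (μ : E) :
    ∫ x : E, (2 * Real.pi) ^ (-(d : ℝ) / 2) * Real.exp (-‖x - μ‖ ^ 2 / 2) = 1 := by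
  rw [integral_const_mul]
  have h1 : ∫ x : E, Real.exp (-‖x - μ‖ ^ 2 / 2) = ∫ x : E, Real.exp (-‖x‖ ^ 2 / 2) :=
    integral_sub_right_eq_self (fun x : E => Real.exp (-‖x‖ ^ 2 / 2)) μ
  rw [h1]
  have h2 : ∀ x : E, Real.exp (-‖x‖ ^ 2 / 2) = Real.exp (-(1/2 : ℝ) * ‖x‖ ^ 2) := by
    intro x; ring_nf
  simp_rw [h2]
  rw [GaussianFourier.integral_rexp_neg_mul_sq_norm (by norm_num : (0:ℝ) < 1/2)]
  rw [finrank_euclideanSpace_fin]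
  have h3 : (Real.pi / (1/2)) = 2 * Real.pi := by ring
  rw [h3, ← Real.rpow_add (by positivity)]
  rw [show -(d : ℝ) / 2 + (d : ℝ) / 2 = 0 by ring, Real.rpow_zero]

lemma integrable_dens (μ : E) :
    Integrable (fun x : E => Real.exp (-‖x - μ‖ ^ 2 / 2)) := by
  have h0 : Integrable (fun x : E => Real.exp (-‖x‖ ^ 2 / 2)) := by
    have hc := GaussianFourier.integrable_cexp_neg_mul_sq_norm_add (V := E)
      (b := (1/2 : ℂ)) (by norm_num) 0 (0 : E)
    refine hc.norm.congr (Filter.Eventually.of_forall fun x => ?_)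
    beta_reduce
    rw [Complex.norm_exp]
    congr 1
    simp
    rw [show ((‖x‖:ℂ) ^ 2) = ((‖x‖ ^ 2 : ℝ) : ℂ) by push_cast; ring, Complex.ofReal_re]
    ring
  exact h0.comp_sub_right μ

section Tanh
lemma abs_tanh_le_one (x : ℝ) : |Real.tanh x| ≤ 1 := by
  rw [Real.tanh_eq_sinh_div_cosh, abs_div, abs_of_pos (Real.cosh_pos x),
    div_le_one (Real.cosh_pos x), abs_le]
  have h1 := Real.cosh_add_sinh x
  have h2 := Real.cosh_sub_sinh x
  have e1 := Real.exp_pos x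
  have e2 := Real.exp_pos (-x)
  constructor <;> nlinarith

lemma tanh_lt_one (x : ℝ) : Real.tanh x < 1 := by
  rw [Real.tanh_eq_sinh_div_cosh, div_lt_one (Real.cosh_pos x)]
  nlinarith [Real.cosh_sub_sinh x, Real.exp_pos (-x)]

lemma continuous_tanh : Continuous Real.tanh := by
  have : Real.tanh = fun x => Real.sinh x / Real.cosh x :=
    funext fun x => Real.tanh_eq_sinh_div_cosh x
  rw [this]
  exact Real.continuous_sinh.div Real.continuous_cosh fun x => (Real.cosh_pos x).ne'
end Tanh

lemma integrable_main (a : ℝ) (θ₀ μ : E) :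
    Integrable (fun x : E => Real.tanh (a + ⟪θ₀, x⟫)
      * ((2 * Real.pi) ^ (-(d : ℝ) / 2) * Real.exp (-‖x - μ‖ ^ 2 / 2))) := by
  refine ((integrable_dens μ).const_mul _).bdd_mul (c := 1) ?_ (Filter.Eventually.of_forall fun x => ?_)
  · exact (continuous_tanh.comp (continuous_const.add
      (continuous_const.inner continuous_id))).aestronglyMeasurable
  · simpa using abs_tanh_le_one (a + ⟪θ₀, x⟫)

lemma integrable_gaussian (a : ℝ) (θ₀ μ : E) :
    Integrable (fun x : E => Real.tanh (a + ⟪θ₀, x⟫)) (gaussian d μ) := by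
  rw [gaussian_eq, integrable_withDensity_iff_integrable_smul (dens_meas μ)]
  refine (integrable_main a θ₀ μ).congr (Filter.Eventually.of_forall fun x => ?_)
  beta_reduce
  rw [NNReal.smul_def, Real.coe_toNNReal _ (dens_nonneg μ x), smul_eq_mul, mul_comm]

lemma key_exp (θ₀ x : E) :
    Real.exp (-‖x - θ₀‖ ^ 2 / 2)
      = Real.exp ⟪θ₀, x⟫ * Real.exp (-(‖x‖ ^ 2 + ‖θ₀‖ ^ 2) / 2) := by
  rw [← Real.exp_add]
  congr 1
  rw [norm_sub_sq_real, real_inner_comm]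
  ring

lemma key_exp_neg (θ₀ x : E) :
    Real.exp (-‖x - -θ₀‖ ^ 2 / 2)
      = Real.exp (-⟪θ₀, x⟫) * Real.exp (-(‖x‖ ^ 2 + ‖θ₀‖ ^ 2) / 2) := by
  rw [← Real.exp_add, sub_neg_eq_add]
  congr 1
  rw [norm_add_sq_real, real_inner_comm]
  ring

end AsymMixProof

open AsymMixProof in
/-- with `β > 1`, `m` the unique positive root of `m = tanh(βm)` and
`P_{θ₀}` the weighted mixture with weights `(1±m)/2`, one has
`E_{P_{θ₀}} tanh(βm + θ₀ᵀX) = m`. -/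
theorem asymMix_tanh_mean (d : ℕ) (β m : ℝ) (θ₀ : EuclideanSpace ℝ (Fin d))
    (hβ : 1 < β) (hm : 0 < m) (hfix : m = Real.tanh (β * m)) :
    ∫ x, Real.tanh (β * m + ⟪θ₀, x⟫) ∂(asymMix d θ₀ m) = m := by
  have hm1 : m < 1 := by rw [hfix]; exact tanh_lt_one _
  have hp : (0:ℝ) ≤ (1 + m) / 2 := by linarith
  have hq : (0:ℝ) ≤ (1 - m) / 2 := by linarith
  have hintp := integrable_gaussian (d := d) (β * m) θ₀ θ₀
  have hintm := integrable_gaussian (d := d) (β * m) θ₀ (-θ₀)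
  rw [asymMix, integral_add_measure (hintp.smul_measure ENNReal.ofReal_ne_top)
      (hintm.smul_measure ENNReal.ofReal_ne_top),
    integral_smul_measure, integral_smul_measure,
    ENNReal.toReal_ofReal hp, ENNReal.toReal_ofReal hq,
    integral_gaussian_fun, integral_gaussian_fun, smul_eq_mul, smul_eq_mul]
  have intp : Integrable (fun x : EuclideanSpace ℝ (Fin d) =>
      ((2 * Real.pi) ^ (-(d : ℝ) / 2) * Real.exp (-‖x - θ₀‖ ^ 2 / 2))
        * Real.tanh (β * m + ⟪θ₀, x⟫)) :=
    (integrable_main (β * m) θ₀ θ₀).congr (Filter.Eventually.of_forall fun x => mul_comm _ _)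
  have intm : Integrable (fun x : EuclideanSpace ℝ (Fin d) =>
      ((2 * Real.pi) ^ (-(d : ℝ) / 2) * Real.exp (-‖x - -θ₀‖ ^ 2 / 2))
        * Real.tanh (β * m + ⟪θ₀, x⟫)) :=
    (integrable_main (β * m) θ₀ (-θ₀)).congr (Filter.Eventually.of_forall fun x => mul_comm _ _)
  have hsum : ∫ x : EuclideanSpace ℝ (Fin d),
      ((1 + m) / 2 * (((2 * Real.pi) ^ (-(d : ℝ) / 2) * Real.exp (-‖x - θ₀‖ ^ 2 / 2))
          * Real.tanh (β * m + ⟪θ₀, x⟫))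
        + (1 - m) / 2 * (((2 * Real.pi) ^ (-(d : ℝ) / 2) * Real.exp (-‖x - -θ₀‖ ^ 2 / 2))
          * Real.tanh (β * m + ⟪θ₀, x⟫)))
      = (1 + m) / 2 * (∫ x : EuclideanSpace ℝ (Fin d),
          ((2 * Real.pi) ^ (-(d : ℝ) / 2) * Real.exp (-‖x - θ₀‖ ^ 2 / 2))
            * Real.tanh (β * m + ⟪θ₀, x⟫))
        + (1 - m) / 2 * (∫ x : EuclideanSpace ℝ (Fin d),
          ((2 * Real.pi) ^ (-(d : ℝ) / 2) * Real.exp (-‖x - -θ₀‖ ^ 2 / 2))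
            * Real.tanh (β * m + ⟪θ₀, x⟫)) := by
    rw [integral_add (intp.const_mul _) (intm.const_mul _), integral_const_mul, integral_const_mul]
  rw [← hsum]
  have hkey : (fun x : EuclideanSpace ℝ (Fin d) =>
      (1 + m) / 2 * (((2 * Real.pi) ^ (-(d : ℝ) / 2) * Real.exp (-‖x - θ₀‖ ^ 2 / 2))
          * Real.tanh (β * m + ⟪θ₀, x⟫))
        + (1 - m) / 2 * (((2 * Real.pi) ^ (-(d : ℝ) / 2) * Real.exp (-‖x - -θ₀‖ ^ 2 / 2))
          * Real.tanh (β * m + ⟪θ₀, x⟫)))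
      = fun x : EuclideanSpace ℝ (Fin d) =>
        (1 + m) / 2 * ((2 * Real.pi) ^ (-(d : ℝ) / 2) * Real.exp (-‖x - θ₀‖ ^ 2 / 2))
        - (1 - m) / 2 * ((2 * Real.pi) ^ (-(d : ℝ) / 2) * Real.exp (-‖x - -θ₀‖ ^ 2 / 2)) := by
    funext x
    rw [key_exp θ₀ x, key_exp_neg θ₀ x]
    have key := tanh_alg (β * m) ⟪θ₀, x⟫
    rw [← hfix] at key
    linear_combination ((2 * Real.pi) ^ (-(d : ℝ) / 2))
      * Real.exp (-(‖x‖ ^ 2 + ‖θ₀‖ ^ 2) / 2) * key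
  have np : ∫ x : EuclideanSpace ℝ (Fin d),
      (1 + m) / 2 * ((2 * Real.pi) ^ (-(d : ℝ) / 2) * Real.exp (-‖x - θ₀‖ ^ 2 / 2))
      = (1 + m) / 2 := by
    rw [integral_const_mul, integral_dens θ₀, mul_one]
  have nm : ∫ x : EuclideanSpace ℝ (Fin d),
      (1 - m) / 2 * ((2 * Real.pi) ^ (-(d : ℝ) / 2) * Real.exp (-‖x - -θ₀‖ ^ 2 / 2))
      = (1 - m) / 2 := by
    rw [integral_const_mul, integral_dens (-θ₀), mul_one]
  rw [hkey, integral_sub (((integrable_dens θ₀).const_mul _).const_mul _)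
      (((integrable_dens (-θ₀)).const_mul _).const_mul _), np, nm]
  ring
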